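/- Let Compress be the LZ77 compression function with unbounded sliding window size W = n over a finite alphabet Σ. Then the global sensitivity for strings of length n satisfies GS ≤ ((∛9/2)·n^{2/3} + (∛3/2)·n^{1/3} + 1)·(2⌈log₂ n⌉ + ⌈log₂|Σ|⌉). -/

import Mathlib

/-- A single LZ77 block `[q, len, c]`. -/
structure LZBlock (α : Type*) where
  q : ℕ
  len : ℕ
  c : α

/-- `s_i` (1-indexed start position of the `i`-th block, `i` 0-indexed). -/
def blockStart {α : Type*} (B : List (LZBlock α)) (i : ℕ) : ℕ :=
  1 + ((B.take i).map (fun b => b.len + 1)).sum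

/-- `f_i` (1-indexed final position of the `i`-th block, `i` 0-indexed). -/
def blockFin {α : Type*} (B : List (LZBlock α)) (i : ℕ) : ℕ :=
  ((B.take (i + 1)).map (fun b => b.len + 1)).sum

/-- `ℓ_i`, recovered as `f_i - s_i`. -/
def lenAt {α : Type*} (B : List (LZBlock α)) (i : ℕ) : ℕ :=
  blockFin B i - blockStart B i

/-- Non-overlapping LZ77 parse, sliding window `W`, of the length-`n` string `w`
(1-indexed positions). -/
def IsLZ77Parse {α : Type*} (W n : ℕ) (w : ℕ → α) (B : List (LZBlock α)) : Prop :=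
  ((B.map (fun b => b.len + 1)).sum = n) ∧
  ∀ i : Fin B.length,
    ((B.get i).c = w (blockStart B i.1 + (B.get i).len)) ∧
    ((B.get i).len = 0 → (B.get i).q = 0) ∧
    (0 < (B.get i).len →
      1 ≤ (B.get i).q ∧
      blockStart B i.1 ≤ (B.get i).q + W ∧
      (B.get i).q + (B.get i).len ≤ blockStart B i.1 ∧
      ∀ d < (B.get i).len, w ((B.get i).q + d) = w (blockStart B i.1 + d)) ∧
    (blockStart B i.1 + (B.get i).len + 1 ≤ n →
      ¬ ∃ q', 1 ≤ q' ∧ blockStart B i.1 ≤ q' + W ∧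
          q' + (B.get i).len + 1 ≤ blockStart B i.1 ∧
          ∀ d ≤ (B.get i).len, w (q' + d) = w (blockStart B i.1 + d))

/-- LZ77 parse with self-referencing (unbounded window). -/
def IsLZ77SRParse {α : Type*} (n : ℕ) (w : ℕ → α) (B : List (LZBlock α)) : Prop :=
  ((B.map (fun b => b.len + 1)).sum = n) ∧
  ∀ i : Fin B.length,
    ((B.get i).c = w (blockStart B i.1 + (B.get i).len)) ∧
    ((B.get i).len = 0 → (B.get i).q = 0) ∧
    (0 < (B.get i).len →
      1 ≤ (B.get i).q ∧
      (B.get i).q < blockStart B i.1 ∧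
      ∀ d < (B.get i).len, w ((B.get i).q + d) = w (blockStart B i.1 + d)) ∧
    (blockStart B i.1 + (B.get i).len + 1 ≤ n →
      ¬ ∃ q', 1 ≤ q' ∧ q' < blockStart B i.1 ∧
          ∀ d ≤ (B.get i).len, w (q' + d) = w (blockStart B i.1 + d))

/-- `w ∼ w'`: strings of length `n` differing in exactly one position. -/
def Neighbor {α : Type*} (n : ℕ) (w w' : ℕ → α) : Prop :=
  ∃ j, 1 ≤ j ∧ j ≤ n ∧ w j ≠ w' j ∧ ∀ i, i ≠ j → w i = w' i

/-- `M_i`: the set of (0-indexed) blocks of `B'` that start inside block `i` of `B`. -/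
def Mset {α : Type*} (B B' : List (LZBlock α)) (i : ℕ) : Finset ℕ :=
  (Finset.range B'.length).filter
    (fun k => blockStart B i ≤ blockStart B' k ∧ blockStart B' k ≤ blockFin B i)

/-- Indices of type-`m` blocks of `B` (relative to `B'`). -/
def typeSet {α : Type*} (B B' : List (LZBlock α)) (m : ℕ) : Finset ℕ :=
  (Finset.range B.length).filter (fun i => (Mset B B' i).card = m)

/-- Number of bits used to encode each block. -/
def codeLen (n cardS : ℕ) : ℕ :=
  2 * Nat.clog 2 n + Nat.clog 2 cardS

namespace LZSens

open Finset

variable {α : Type*}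

/-! ### Prefix sums and block geometry -/

def SP (B : List (LZBlock α)) (i : ℕ) : ℕ :=
  ((B.take i).map (fun b => b.len + 1)).sum

def qOf (B : List (LZBlock α)) (i : ℕ) : ℕ :=
  if h : i < B.length then B[i].q else 0

lemma SP_succ (B : List (LZBlock α)) (i : ℕ) (h : i < B.length) :
    SP B (i+1) = SP B i + (B[i].len + 1) := by
  unfold SP
  rw [List.map_take, List.map_take, List.sum_take_succ _ i (by simpa using h)]
  simp

lemma SP_succ_ge (B : List (LZBlock α)) (i : ℕ) : SP B i ≤ SP B (i+1) := by
  by_cases h : i < B.length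
  · rw [SP_succ B i h]; omega
  · unfold SP
    rw [List.take_of_length_le (by omega), List.take_of_length_le (by omega)]

lemma SP_mono (B : List (LZBlock α)) : Monotone (SP B) :=
  monotone_nat_of_le_succ (SP_succ_ge B)

lemma blockFin_def (B : List (LZBlock α)) (i : ℕ) : blockFin B i = SP B (i+1) := rfl

lemma blockStart_def (B : List (LZBlock α)) (i : ℕ) : blockStart B i = 1 + SP B i := rfl

lemma blockStart_succ (B : List (LZBlock α)) (i : ℕ) :
    blockStart B (i+1) = blockFin B i + 1 := by
  rw [blockStart_def, blockFin_def]; omega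

lemma blockFin_eq (B : List (LZBlock α)) (i : ℕ) (h : i < B.length) :
    blockFin B i = blockStart B i + B[i].len := by
  rw [blockStart_def, blockFin_def, SP_succ B i h]; omega

lemma blockStart_mono (B : List (LZBlock α)) : Monotone (blockStart B) := by
  intro a b hab
  rw [blockStart_def, blockStart_def]
  exact Nat.add_le_add_left (SP_mono B hab) 1

lemma blockStart_pos (B : List (LZBlock α)) (i : ℕ) : 1 ≤ blockStart B i := by
  rw [blockStart_def]; omega

lemma lenAt_eq (B : List (LZBlock α)) (i : ℕ) (h : i < B.length) :
    lenAt B i = B[i].len := by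
  unfold lenAt
  rw [blockFin_eq B i h, blockStart_def]
  omega

lemma qOf_eq (B : List (LZBlock α)) (i : ℕ) (h : i < B.length) :
    qOf B i = B[i].q := dif_pos h

section Parse

variable {n : ℕ} {w : ℕ → α} {B : List (LZBlock α)}

lemma SP_full (hB : IsLZ77Parse n n w B) : SP B B.length = n := by
  unfold SP
  rw [List.take_length]
  exact hB.1

lemma SP_le_n (hB : IsLZ77Parse n n w B) (i : ℕ) : SP B i ≤ n := by
  rcases le_total i B.length with h | h
  · rw [← SP_full hB]; exact SP_mono B h
  · unfold SP
    rw [List.take_of_length_le h]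
    exact le_of_eq hB.1

lemma blockFin_le_n (hB : IsLZ77Parse n n w B) (i : ℕ) : blockFin B i ≤ n := by
  rw [blockFin_def]; exact SP_le_n hB _

lemma length_pos (hB : IsLZ77Parse n n w B) (hn : 1 ≤ n) : 0 < B.length := by
  by_contra h
  have hB0 : B = [] := List.length_eq_zero_iff.mp (by omega)
  have := hB.1
  rw [hB0] at this
  simp at this
  omega

lemma exists_block (hB : IsLZ77Parse n n w B) (hn : 1 ≤ n) (p : ℕ)
    (hp1 : 1 ≤ p) (hpn : p ≤ n) :
    ∃ i, i < B.length ∧ blockStart B i ≤ p ∧ p ≤ blockFin B i := by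
  have ht0 : 0 < B.length := length_pos hB hn
  have hex : ∃ i, p ≤ blockFin B i := by
    refine ⟨B.length - 1, ?_⟩
    rw [blockFin_def]
    have h1 : B.length - 1 + 1 = B.length := by omega
    rw [h1, SP_full hB]
    exact hpn
  refine ⟨Nat.find hex, ?_, ?_, Nat.find_spec hex⟩
  · have h2 : Nat.find hex ≤ B.length - 1 := Nat.find_min' hex (by
      rw [blockFin_def]
      have h1 : B.length - 1 + 1 = B.length := by omega
      rw [h1, SP_full hB]
      exact hpn)
    omega
  · rcases h : Nat.find hex with _ | m
    · rw [blockStart_def]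
      have : SP B 0 = 0 := by unfold SP; simp
      omega
    · have hm := Nat.find_min hex (by omega : m < Nat.find hex)
      push_neg at hm
      have := blockStart_succ B m
      omega

lemma block_copy (hB : IsLZ77Parse n n w B) {i : ℕ} (hi : i < B.length)
    (hpos : 0 < lenAt B i) :
    1 ≤ qOf B i ∧ qOf B i + lenAt B i ≤ blockStart B i ∧
      ∀ d < lenAt B i, w (qOf B i + d) = w (blockStart B i + d) := by
  have hL := lenAt_eq B i hi
  have hq := qOf_eq B i hi
  have h := (hB.2 ⟨i, hi⟩).2.2.1
  simp only [List.get_eq_getElem] at h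
  obtain ⟨h1, -, h3, h4⟩ := h (by omega)
  rw [hq, hL]
  exact ⟨h1, h3, h4⟩

lemma block_max (hB : IsLZ77Parse n n w B) {k : ℕ} (hk : k < B.length)
    (happ : blockStart B k + lenAt B k + 1 ≤ n) {q' : ℕ} (h1 : 1 ≤ q')
    (h2 : blockStart B k ≤ q' + n) (h3 : q' + lenAt B k + 1 ≤ blockStart B k)
    (hm : ∀ d ≤ lenAt B k, w (q' + d) = w (blockStart B k + d)) : False := by
  have hL := lenAt_eq B k hk
  have h := (hB.2 ⟨k, hk⟩).2.2.2
  simp only [List.get_eq_getElem] at h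
  rw [← hL] at h
  exact h happ ⟨q', h1, h2, h3, hm⟩

lemma sum_lenAt (hB : IsLZ77Parse n n w B) :
    ∑ i ∈ range B.length, (lenAt B i + 1) = n := by
  suffices h : ∀ m ≤ B.length, ∑ i ∈ range m, (lenAt B i + 1) = SP B m by
    rw [h B.length le_rfl, SP_full hB]
  intro m
  induction m with
  | zero => intro _; unfold SP; simp
  | succ m ih =>
    intro hm
    rw [Finset.sum_range_succ, ih (by omega), SP_succ B m (by omega),
      lenAt_eq B m (by omega)]

end Parse


def T (a : ℕ) : ℕ := ∑ v ∈ range (a+1), v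

lemma two_T (a : ℕ) : 2 * T a = a * (a+1) := by
  unfold T
  rw [mul_comm]
  rw [Finset.sum_range_id_mul_two (a+1)]
  simp [mul_comm]

lemma T_mono : Monotone T := by
  intro a b hab
  unfold T
  exact Finset.sum_le_sum_of_subset (by simp [Finset.range_subset]; omega)

lemma T_succ (a : ℕ) : T (a+1) = T a + (a+1) := by
  unfold T; rw [Finset.sum_range_succ]

lemma T_ge (a : ℕ) : a ≤ T a := by
  have := two_T a; nlinarith

lemma sixD (k : ℕ) : 6 * (∑ a ∈ range (k+1), T a) = k * (k+1) * (k+2) := by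
  induction k with
  | zero => simp [T]
  | succ k ih =>
    rw [Finset.sum_range_succ, Nat.mul_add, ih]
    have h2 : 2 * T (k+1) = (k+1) * (k+2) := by simpa using two_T (k+1)
    zify at h2 ⊢
    linear_combination 3 * h2

lemma exists_k (E : ℕ) : ∃ k, T k ≤ E ∧ E < T (k+1) := by
  refine ⟨Nat.findGreatest (fun a => T a ≤ E) E, ?_, ?_⟩
  · exact Nat.findGreatest_spec (P := fun a => T a ≤ E) (Nat.zero_le E) (by simp [T])
  · set k := Nat.findGreatest (fun a => T a ≤ E) E with hk
    by_cases hc : k + 1 ≤ E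
    · have := Nat.findGreatest_is_greatest (P := fun a => T a ≤ E) (n := E)
        (by omega : Nat.findGreatest (fun a => T a ≤ E) E < k+1) hc
      omega
    · have h1 : E ≤ k := by omega
      have h2 := T_ge (k+1)
      omega

set_option maxHeartbeats 2000000 in
lemma counting (K : Finset ℕ) (L : ℕ → ℕ) (m : ℕ)
    (hcnt : ∀ ℓ, (K.filter (fun k => L k = ℓ)).card ≤ ℓ + 1)
    (hsum : ∑ k ∈ K, (L k + 1) ≤ m) :
    (K.card : ℝ) ≤ (((3*m : ℕ) : ℝ) ^ ((2:ℝ)/3) + ((3*m : ℕ):ℝ) ^ ((1:ℝ)/3)) / 2 := by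
  classical
  set E := K.card with hE
  obtain ⟨k, hTk, hTk1⟩ := exists_k E
  set r := E - T k with hr
  have hrk : r ≤ k := by have := T_succ k; omega
  have hEr : E = T k + r := by omega
  set D := ∑ a ∈ range (k+1), T a with hD
  have hNle : ∀ a, (K.filter (fun k' => L k' < a)).card ≤ T a := by
    intro a
    have hsub : K.filter (fun k' => L k' < a) ⊆ (range a).biUnion (fun ℓ => K.filter (fun k' => L k' = ℓ)) := by
      intro x hx
      simp only [Finset.mem_filter, Finset.mem_biUnion, Finset.mem_range] at hx ⊢
      exact ⟨L x, hx.2, hx.1, rfl⟩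
    calc (K.filter (fun k' => L k' < a)).card ≤ _ := Finset.card_le_card hsub
      _ ≤ ∑ ℓ ∈ range a, (K.filter (fun k' => L k' = ℓ)).card := Finset.card_biUnion_le
      _ ≤ ∑ ℓ ∈ range a, (ℓ + 1) := Finset.sum_le_sum (fun ℓ _ => hcnt ℓ)
      _ = T a := by unfold T; rw [Finset.sum_range_succ']; simp
  have hswap : ∑ a ∈ range (k+1), (K.filter (fun k' => a < L k' + 1)).card ≤ m := by
    have h1 : ∑ a ∈ range (k+1), (K.filter (fun k' => a < L k' + 1)).card
        = ∑ k' ∈ K, ((range (k+1)).filter (fun a => a < L k' + 1)).card := by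
      simp only [Finset.card_filter]
      rw [Finset.sum_comm]
    rw [h1]
    refine le_trans (Finset.sum_le_sum (fun k' _ => ?_)) hsum
    calc ((range (k+1)).filter (fun a => a < L k' + 1)).card
        ≤ (range (L k' + 1)).card := Finset.card_le_card (by intro x hx; simp at hx ⊢; omega)
      _ = L k' + 1 := by simp
  have hterm : ∀ a ∈ range (k+1), E - T a ≤ (K.filter (fun k' => a < L k' + 1)).card := by
    intro a _
    have hsplit := Finset.card_filter_add_card_filter_not (s := K)
      (p := fun k' => a < L k' + 1)
    have hN := hNle a
    have hEq : (K.filter (fun k' => ¬ a < L k' + 1)) = (K.filter (fun k' => L k' < a)) := by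
      apply Finset.filter_congr; intro x _; simp
    rw [hEq] at hsplit
    omega
  have hkey : (k+1) * E ≤ m + D := by
    have h2 : ∑ a ∈ range (k+1), (E - T a) ≤ m := le_trans (Finset.sum_le_sum hterm) hswap
    have h3 : ∑ a ∈ range (k+1), (E - T a) + D = (k+1) * E := by
      rw [hD, ← Finset.sum_add_distrib]
      have heach : ∀ a ∈ range (k+1), E - T a + T a = E := by
        intro a ha
        have : T a ≤ T k := T_mono (by simp at ha; omega)
        omega
      rw [Finset.sum_congr rfl heach]
      simp [mul_comm]
    omega
  -- numeric part over ℝ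
  have hk0 : (0:ℝ) ≤ (k:ℝ) := Nat.cast_nonneg k
  have c1 : ((k:ℝ)+1) * E ≤ m + D := by exact_mod_cast hkey
  have c2 : 2 * (T k : ℝ) = k * (k+1) := by exact_mod_cast two_T k
  have c3 : 6 * (D:ℝ) = k * (k+1) * (k+2) := by exact_mod_cast sixD k
  have c4 : (r:ℝ) ≤ k := by exact_mod_cast hrk
  have c5 : (E:ℝ) = T k + r := by exact_mod_cast hEr
  have c6 : (0:ℝ) ≤ r := by positivity
  have hEkr : (E:ℝ) = ((k:ℝ)*k + k)/2 + r := by linarith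
  have hDk : (D:ℝ) = ((k:ℝ)*k*k + 3*k*k + 2*k)/6 := by nlinarith [c3]
  have hx3 : (0:ℝ) ≤ ((3*m : ℕ):ℝ) := by positivity
  set x : ℝ := ((3*m : ℕ):ℝ) ^ ((1:ℝ)/3) with hxdef
  have hx0 : 0 ≤ x := Real.rpow_nonneg hx3 _
  have hxcube : x ^ 3 = ((3*m:ℕ):ℝ) := by
    rw [hxdef, ← Real.rpow_natCast (((3*m:ℕ):ℝ) ^ ((1:ℝ)/3)) 3, ← Real.rpow_mul hx3]
    norm_num
  have hx2 : ((3*m : ℕ):ℝ) ^ ((2:ℝ)/3) = x ^ 2 := by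
    rw [hxdef, ← Real.rpow_natCast (((3*m:ℕ):ℝ) ^ ((1:ℝ)/3)) 2, ← Real.rpow_mul hx3]
    norm_num
  rw [hx2]
  set y : ℝ := (Real.sqrt (8*E+1) - 1)/2 with hy
  have hs : Real.sqrt (8*E+1) ^ 2 = 8*E+1 := Real.sq_sqrt (by have h0 : (0:ℝ) ≤ (E:ℝ) := Nat.cast_nonneg _; linarith)
  have hs0 : 0 ≤ Real.sqrt (8*E+1) := Real.sqrt_nonneg _
  have hy2 : y^2 + y = 2*E := by rw [hy]; nlinarith [hs]
  have hy0 : 0 ≤ y := by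
    have h1 : (1:ℝ) ≤ Real.sqrt (8*E+1) := by nlinarith [hs, hs0]
    rw [hy]; linarith
  have hyk : (k:ℝ) ≤ y := by nlinarith [hy2, hEkr, c6, hy0]
  have hyk1 : y ≤ (k:ℝ) + 1 := by nlinarith [hy2, hEkr, c4, hy0, hk0]
  have e1 : y^2 = 2*E - y := by linarith [hy2]
  have h2Ey : 0 ≤ 2*(E:ℝ) - y := by nlinarith [e1, sq_nonneg y]
  have e3 : y^3 = y*(2*(E:ℝ)-y) := by linear_combination y * e1
  have e4 : y^3 ≤ ((k:ℝ)+1)*(2*(E:ℝ)-(k:ℝ)) := by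
    rw [e3]
    calc y*(2*(E:ℝ)-y) ≤ ((k:ℝ)+1)*(2*(E:ℝ)-y) :=
          mul_le_mul_of_nonneg_right hyk1 h2Ey
      _ ≤ ((k:ℝ)+1)*(2*(E:ℝ)-(k:ℝ)) := by
          apply mul_le_mul_of_nonneg_left (by linarith [hyk]) (by linarith [hk0])
  have id1 : 3*(((k:ℝ)+1)*E - D) - ((k:ℝ)+1)*(2*(E:ℝ)-(k:ℝ))
      = ((k:ℝ)*k + k + 2*k*r + 2*r)/2 := by
    linear_combination ((k:ℝ)+1)*hEkr - 3*hDk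
  have hy3 : y^3 ≤ 3*(m:ℝ) := by
    have hnn : 0 ≤ ((k:ℝ)*k + k + 2*k*r + 2*r)/2 := by positivity
    linarith [e4, id1, c1]
  have hxy : y ≤ x := by
    have hc : y^3 ≤ x^3 := by rw [hxcube]; push_cast; linarith
    exact (pow_le_pow_iff_left₀ hy0 hx0 (by norm_num)).mp hc
  have hyy : y*y ≤ x*x := mul_le_mul hxy hxy hy0 hx0
  nlinarith [hy2, hxy, hy0, hx0, hyy]

set_option maxHeartbeats 2000000 in
lemma oneSided {α : Type*} (n : ℕ) (w w' : ℕ → α) (j : ℕ)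
    (hj1 : 1 ≤ j) (hjn : j ≤ n)
    (hww' : ∀ x, x ≠ j → w x = w' x)
    (B B' : List (LZBlock α)) (hB : IsLZ77Parse n n w B) (hB' : IsLZ77Parse n n w' B') :
    (B'.length : ℝ) ≤ (B.length : ℝ) + 1 +
      ((((3*n : ℕ) : ℝ) ^ ((2:ℝ)/3) + ((3*n : ℕ):ℝ) ^ ((1:ℝ)/3)) / 2) := by
  classical
  have hn1 : 1 ≤ n := le_trans hj1 hjn
  -- each B' block start lies in a block of B
  have hIex : ∀ k, k < B'.length → ∃ i, i < B.length ∧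
      blockStart B i ≤ blockStart B' k ∧ blockStart B' k ≤ blockFin B i := by
    intro k hk
    refine exists_block hB hn1 _ (blockStart_pos B' k) ?_
    have h1 : blockFin B' k ≤ n := blockFin_le_n hB' k
    have h2 := blockFin_eq B' k hk
    omega
  choose! I hI1 hI2 hI3 using hIex
  -- basic facts about each B' block
  have hPfacts : ∀ k, k < B'.length →
      blockStart B' (k+1) = blockStart B' k + lenAt B' k + 1 ∧ blockStart B' k + lenAt B' k ≤ n := by
    intro k hk
    have h1 := blockStart_succ B' k
    have h2 := blockFin_eq B' k hk
    have h3 := blockFin_le_n hB' k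
    have h4 := lenAt_eq B' k hk
    constructor <;> omega
  -- the extra blocks
  set X : Finset ℕ := (Finset.range B'.length).filter
      (fun k => k+1 < B'.length ∧ blockStart B' (k+1) ≤ blockFin B (I k)) with hXdef
  -- Step A : t' ≤ t + |X|
  have hstepA : B'.length ≤ B.length + X.card := by
    set Y : Finset ℕ := (Finset.range B'.length).filter
        (fun k => ¬(k+1 < B'.length ∧ blockStart B' (k+1) ≤ blockFin B (I k))) with hYdef
    have hYcard : Y.card ≤ B.length := by
      have hkey : ∀ a ∈ Y, ∀ b ∈ Y, a < b → I a ≠ I b := by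
        intro a ha b hb hab hIab
        rw [hYdef, Finset.mem_filter, Finset.mem_range] at ha hb
        have ha1 : a + 1 < B'.length := by omega
        have ha2 : blockFin B (I a) < blockStart B' (a+1) := by
          rcases ha with ⟨-, h⟩
          push_neg at h
          exact h ha1
        have hb2 : blockStart B' b ≤ blockFin B (I b) := hI3 b hb.1
        have hmono : blockStart B' (a+1) ≤ blockStart B' b :=
          blockStart_mono B' (by omega)
        rw [← hIab] at hb2
        omega
      apply le_trans (Finset.card_le_card_of_injOn I
        (fun k hk => by
          rw [Finset.mem_coe, hYdef, Finset.mem_filter, Finset.mem_range] at hk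
          exact Finset.mem_coe.mpr (Finset.mem_range.mpr (hI1 k hk.1))) ?_) (by simp)
      intro a ha b hb hab
      by_contra hne
      rcases lt_or_gt_of_ne hne with h | h
      · exact hkey a ha b hb h hab
      · exact hkey b hb a ha h hab.symm
    have hXY : X.card + Y.card = B'.length := by
      rw [hXdef, hYdef]
      rw [Finset.card_filter_add_card_filter_not]
      simp
    omega
  -- facts about extra blocks
  have hXfacts : ∀ k ∈ X, k < B'.length ∧ I k < B.length ∧
      blockStart B (I k) ≤ blockStart B' k ∧
      blockStart B' k + lenAt B' k + 1 ≤ blockFin B (I k) ∧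
      blockFin B (I k) = blockStart B (I k) + lenAt B (I k) := by
    intro k hk
    rw [hXdef, Finset.mem_filter, Finset.mem_range] at hk
    obtain ⟨hk1, hk2, hk3⟩ := hk
    have h4 := (hPfacts k hk1).1
    have h5 := blockFin_eq B (I k) (hI1 k hk1)
    have h6 := lenAt_eq B (I k) (hI1 k hk1)
    exact ⟨hk1, hI1 k hk1, hI2 k hk1, by omega, by omega⟩
  -- the candidate source positions
  set g : ℕ → ℕ := fun k => qOf B (I k) + (blockStart B' k - blockStart B (I k)) with hgdef
  -- copy transfer: candidate source for each extra block
  have hcopyX : ∀ k ∈ X, 1 ≤ g k ∧ g k + lenAt B' k + 1 ≤ blockStart B' k ∧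
      ∀ d ≤ lenAt B' k, w (g k + d) = w (blockStart B' k + d) := by
    intro k hk
    obtain ⟨hk1, hkI, hk3, hk4, hk5⟩ := hXfacts k hk
    have hpos : 0 < lenAt B (I k) := by omega
    obtain ⟨hq1, hq2, hq3⟩ := block_copy hB hkI hpos
    have hg : g k = qOf B (I k) + (blockStart B' k - blockStart B (I k)) := rfl
    refine ⟨by omega, by omega, ?_⟩
    intro d hd
    have he : blockStart B' k + d - blockStart B (I k) < lenAt B (I k) := by omega
    have hcp := hq3 _ he
    have e1 : g k + d = qOf B (I k) + (blockStart B' k + d - blockStart B (I k)) := by omega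
    have e2 : blockStart B (I k) + (blockStart B' k + d - blockStart B (I k))
        = blockStart B' k + d := by omega
    rw [e1, hcp, e2]
  -- dichotomy: each extra block either covers j or its candidate window covers j
  have hdich : ∀ k ∈ X, (blockStart B' k ≤ j ∧ j ≤ blockStart B' k + lenAt B' k) ∨
      (g k ≤ j ∧ j ≤ g k + lenAt B' k) := by
    intro k hk
    obtain ⟨hk1, hkI, hk3, hk4, hk5⟩ := hXfacts k hk
    obtain ⟨hg1, hg2, hg3⟩ := hcopyX k hk
    by_contra hcon
    push_neg at hcon
    obtain ⟨hc1, hc2⟩ := hcon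
    have hmatch : ∀ d ≤ lenAt B' k, w' (g k + d) = w' (blockStart B' k + d) := by
      intro d hd
      have hne1 : g k + d ≠ j := by
        intro hEq
        have := hc2 (by omega)
        omega
      have hne2 : blockStart B' k + d ≠ j := by
        intro hEq
        have := hc1 (by omega)
        omega
      rw [← hww' _ hne1, ← hww' _ hne2]
      exact hg3 d hd
    have hfin_n : blockFin B (I k) ≤ n := blockFin_le_n hB (I k)
    have hpk_n : blockStart B' k ≤ n := by omega
    exact block_max hB' hk1 (by omega) (by omega : 1 ≤ g k)
      (by omega : blockStart B' k ≤ g k + n) (by omega) hmatch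
  -- split X into the (unique) block covering j and the rest
  set X1 : Finset ℕ := X.filter
      (fun k => blockStart B' k ≤ j ∧ j ≤ blockStart B' k + lenAt B' k) with hX1def
  set X2 : Finset ℕ := X.filter
      (fun k => ¬(blockStart B' k ≤ j ∧ j ≤ blockStart B' k + lenAt B' k)) with hX2def
  have hX1card : X1.card ≤ 1 := by
    rw [Finset.card_le_one]
    intro a ha b hb
    rw [hX1def, Finset.mem_filter] at ha hb
    have key : ∀ a b, a ∈ X → b ∈ X →
        (blockStart B' a ≤ j ∧ j ≤ blockStart B' a + lenAt B' a) →
        (blockStart B' b ≤ j ∧ j ≤ blockStart B' b + lenAt B' b) → a < b → False := by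
      intro a b haX hbX hja hjb hab
      obtain ⟨ha1, -, -, -, -⟩ := hXfacts a haX
      have hnxt := (hPfacts a ha1).1
      have hmono : blockStart B' (a+1) ≤ blockStart B' b := blockStart_mono B' (by omega)
      omega
    by_contra hne
    rcases lt_or_gt_of_ne hne with h | h
    · exact key a b ha.1 hb.1 ha.2 hb.2 h
    · exact key b a hb.1 ha.1 hb.2 ha.2 h
  have hXsplit : X.card = X1.card + X2.card := by
    rw [hX1def, hX2def, Finset.card_filter_add_card_filter_not]
  -- for X2 blocks : window covers j, and the candidate equals w' on the block
  have hwin : ∀ k ∈ X2, g k ≤ j ∧ j ≤ g k + lenAt B' k := by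
    intro k hk
    rw [hX2def, Finset.mem_filter] at hk
    rcases hdich k hk.1 with h | h
    · exact absurd h hk.2
    · exact h
  have hext : ∀ k ∈ X2, ∀ d ≤ lenAt B' k, w (g k + d) = w' (blockStart B' k + d) := by
    intro k hk d hd
    rw [hX2def, Finset.mem_filter] at hk
    obtain ⟨hkX, hkn⟩ := hk
    obtain ⟨-, -, hg3⟩ := hcopyX k hkX
    push_neg at hkn
    have hne2 : blockStart B' k + d ≠ j := by
      intro hEq
      have := hkn (by omega)
      omega
    rw [hg3 d hd, hww' _ hne2]
  -- counting hypotheses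
  have hcnt : ∀ ℓ, (X2.filter (fun k => lenAt B' k = ℓ)).card ≤ ℓ + 1 := by
    intro ℓ
    have hinj : ∀ a ∈ X2.filter (fun k => lenAt B' k = ℓ), ∀ b ∈ X2.filter (fun k => lenAt B' k = ℓ),
        a < b → g a = g b → False := by
      intro a ha b hb hab hgab
      rw [Finset.mem_filter] at ha hb
      obtain ⟨haX2, haL⟩ := ha
      obtain ⟨hbX2, hbL⟩ := hb
      have haX : a ∈ X := Finset.mem_of_mem_filter a (hX2def ▸ haX2)
      have hbX : b ∈ X := Finset.mem_of_mem_filter b (hX2def ▸ hbX2)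
      obtain ⟨ha1, -, -, ha4, -⟩ := hXfacts a haX
      obtain ⟨hb1, -, -, hb4, hb5⟩ := hXfacts b hbX
      have hfin_n : blockFin B (I b) ≤ n := blockFin_le_n hB (I b)
      have hmatch : ∀ d ≤ lenAt B' b, w' (blockStart B' a + d) = w' (blockStart B' b + d) := by
        intro d hd
        have h1 := hext a haX2 d (by omega)
        have h2 := hext b hbX2 d hd
        rw [← h1, ← h2, hgab]
      have hnxt := (hPfacts a ha1).1
      have hmono : blockStart B' (a+1) ≤ blockStart B' b := blockStart_mono B' (by omega)
      have hpa1 : 1 ≤ blockStart B' a := blockStart_pos B' a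
      have hpbn : blockStart B' b ≤ n := by omega
      exact block_max hB' hb1 (by omega) hpa1 (by omega) (by omega)
        (by rw [haL] at hnxt; rw [hbL] at hmatch ⊢; exact hmatch)
    calc (X2.filter (fun k => lenAt B' k = ℓ)).card
        ≤ (Finset.Icc (j - ℓ) j).card := by
          apply Finset.card_le_card_of_injOn g
          · intro k hk
            rw [Finset.mem_coe, Finset.mem_filter] at hk
            obtain ⟨hkX2, hkL⟩ := hk
            have := hwin k hkX2
            rw [hkL] at this
            rw [Finset.mem_coe, Finset.mem_Icc]
            omega
          · intro a ha b hb hgab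
            by_contra hne
            rcases lt_or_gt_of_ne hne with h | h
            · exact hinj a ha b hb h hgab
            · exact hinj b hb a ha h hgab.symm
      _ ≤ ℓ + 1 := by rw [Nat.card_Icc]; omega
  have hsum : ∑ k ∈ X2, (lenAt B' k + 1) ≤ n := by
    have hsub : X2 ⊆ Finset.range B'.length := by
      intro k hk
      rw [hX2def, Finset.mem_filter, hXdef, Finset.mem_filter] at hk
      exact hk.1.1
    calc ∑ k ∈ X2, (lenAt B' k + 1) ≤ ∑ k ∈ Finset.range B'.length, (lenAt B' k + 1) :=
          Finset.sum_le_sum_of_subset hsub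
      _ = n := sum_lenAt hB'
  have hcount := counting X2 (lenAt B') n hcnt hsum
  -- combine
  have hfinal : B'.length ≤ B.length + 1 + X2.card := by omega
  have hcast : (B'.length : ℝ) ≤ (B.length : ℝ) + 1 + (X2.card : ℝ) := by
    exact_mod_cast hfinal
  linarith [hcount]

end LZSens

set_option maxHeartbeats 1000000 in
/-- Theorem: upper bound on the global sensitivity of LZ77,
`W = n`. Over a finite alphabet `Σ`, for every pair of neighboring strings
`w ∼ w' ∈ Σⁿ` (so the maximum over all such pairs, i.e. the global sensitivity,
obeys the same bound),
`||Compress(w)| − |Compress(w')|| ≤ ((∛9/2)·n^(2/3) + (∛3/2)·n^(1/3) + 1)·(2⌈log₂ n⌉ + ⌈log₂ |Σ|⌉)`,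
where `|Compress(w)| = t·(2⌈log₂ n⌉ + ⌈log₂ |Σ|⌉)` for a `t`-block parse. -/
theorem lz77_global_sensitivity_upper {α : Type*} [Fintype α] (n : ℕ) :
    ∀ w w' : ℕ → α, Neighbor n w w' →
    ∀ B B' : List (LZBlock α),
      IsLZ77Parse n n w B → IsLZ77Parse n n w' B' →
      ((((B.length : ℤ) * (codeLen n (Fintype.card α) : ℤ)
          - (B'.length : ℤ) * (codeLen n (Fintype.card α) : ℤ)).natAbs : ℝ))
        ≤ ((9 : ℝ) ^ ((1 : ℝ) / 3) / 2 * (n : ℝ) ^ ((2 : ℝ) / 3)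
            + (3 : ℝ) ^ ((1 : ℝ) / 3) / 2 * (n : ℝ) ^ ((1 : ℝ) / 3) + 1)
          * (codeLen n (Fintype.card α) : ℝ) := by
  intro w w' hnb B B' hBw hB'w'
  obtain ⟨j, hj1, hjn, hne, hag⟩ := hnb
  have hfor := LZSens.oneSided n w w' j hj1 hjn (fun x hx => hag x hx) B B' hBw hB'w'
  have hbak := LZSens.oneSided n w' w j hj1 hjn (fun x hx => (hag x hx).symm) B' B hB'w' hBw
  have hc0 : (0:ℝ) ≤ (codeLen n (Fintype.card α) : ℝ) := Nat.cast_nonneg _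
  have hM : ((((3*n:ℕ):ℝ) ^ ((2:ℝ)/3) + ((3*n:ℕ):ℝ) ^ ((1:ℝ)/3)) / 2) + 1
      = (9:ℝ)^((1:ℝ)/3)/2 * (n:ℝ)^((2:ℝ)/3) + (3:ℝ)^((1:ℝ)/3)/2 * (n:ℝ)^((1:ℝ)/3) + 1 := by
    have h3n : ((3*n:ℕ):ℝ) = 3 * (n:ℝ) := by push_cast; ring
    have hn0 : (0:ℝ) ≤ (n:ℝ) := Nat.cast_nonneg n
    rw [h3n, Real.mul_rpow (by norm_num) hn0, Real.mul_rpow (by norm_num) hn0]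
    have h923 : (3:ℝ)^((2:ℝ)/3) = (9:ℝ)^((1:ℝ)/3) := by
      rw [show (9:ℝ) = 3^(2:ℕ) by norm_num, ← Real.rpow_natCast 3 2,
        ← Real.rpow_mul (by norm_num : (0:ℝ) ≤ 3)]
      norm_num
    rw [h923]; ring
  have habs : |(B.length:ℝ) - (B'.length:ℝ)|
      ≤ (9:ℝ)^((1:ℝ)/3)/2*(n:ℝ)^((2:ℝ)/3) + (3:ℝ)^((1:ℝ)/3)/2*(n:ℝ)^((1:ℝ)/3) + 1 := by
    rw [← hM]
    exact abs_le.mpr ⟨by linarith, by linarith⟩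
  have hLHS : ((((B.length : ℤ) * (codeLen n (Fintype.card α) : ℤ)
          - (B'.length : ℤ) * (codeLen n (Fintype.card α) : ℤ)).natAbs : ℝ))
      = |(B.length:ℝ) - (B'.length:ℝ)| * (codeLen n (Fintype.card α) : ℝ) := by
    rw [Nat.cast_natAbs]
    push_cast
    rw [show (B.length:ℝ) * (codeLen n (Fintype.card α) : ℝ)
        - (B'.length:ℝ) * (codeLen n (Fintype.card α) : ℝ)
        = ((B.length:ℝ) - (B'.length:ℝ)) * (codeLen n (Fintype.card α) : ℝ) by ring]
    rw [abs_mul, abs_of_nonneg hc0]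
  rw [hLHS]
  exact mul_le_mul_of_nonneg_right habs hc0
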